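/- Let A be an n×n Hurwitz matrix and G a symmetric positive semidefinite n×n matrix with AᵀG = GA. Then GA is symmetric and −GA is positive semidefinite. -/

import Mathlib

open Matrix

private lemma mulVec_map_complex {n : ℕ} (A : Matrix (Fin n) (Fin n) ℝ) (u : Fin n → ℝ) :
    (A.map (fun a => (a : ℂ))) *ᵥ (fun i => (u i : ℂ)) = fun i => ((A *ᵥ u) i : ℂ) := by
  funext i
  simp [Matrix.mulVec, dotProduct, Matrix.map_apply]

private lemma mem_spectrum_of_real_eigenvector {n : ℕ} (A : Matrix (Fin n) (Fin n) ℝ)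
    (μ : ℝ) (u : Fin n → ℝ) (hu : u ≠ 0) (heig : A *ᵥ u = μ • u) :
    (μ : ℂ) ∈ spectrum ℂ (A.map (fun a => (a : ℂ))) := by
  rw [spectrum.mem_iff]
  intro hunit
  rw [Matrix.isUnit_iff_isUnit_det, isUnit_iff_ne_zero] at hunit
  apply hunit
  rw [← Matrix.exists_mulVec_eq_zero_iff]
  refine ⟨fun i => (u i : ℂ), ?_, ?_⟩
  · intro h0
    apply hu
    funext i
    have := congrFun h0 i
    simp only [Pi.zero_apply] at this ⊢
    exact_mod_cast this
  · rw [Algebra.algebraMap_eq_smul_one, Matrix.sub_mulVec, Matrix.smul_mulVec,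
      Matrix.one_mulVec, mulVec_map_complex A u, heig]
    funext i
    simp

private lemma diag_core {n : ℕ} (d : Fin n → ℝ) (hd : ∀ i, 0 ≤ d i)
    (A : Matrix (Fin n) (Fin n) ℝ)
    (hH : ∀ (μ : ℝ) (u : Fin n → ℝ), u ≠ 0 → A *ᵥ u = μ • u → μ < 0)
    (hrec : Aᵀ * diagonal d = diagonal d * A) :
    (-(diagonal d * A)).PosSemidef := by
  classical
  have hrel : ∀ i j, A j i * d j = d i * A i j := by
    intro i j
    have := congrFun (congrFun hrec i) j
    simpa [Matrix.mul_diagonal, Matrix.diagonal_mul, Matrix.transpose_apply] using this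
  set b : Fin n → ℝ := fun i => Real.sqrt (d i) with hb
  set g : Fin n → ℝ := fun i => if d i = 0 then 0 else (Real.sqrt (d i))⁻¹ with hg
  set q : Fin n → ℝ := fun i => if d i = 0 then 0 else 1 with hq
  set r : Fin n → ℝ := fun i => if d i = 0 then 1 else 0 with hr
  have hbb : ∀ i, b i * b i = d i := fun i => Real.mul_self_sqrt (hd i)
  have hbne : ∀ i, d i ≠ 0 → b i ≠ 0 := by
    intro i hi h0
    exact hi (by rw [← hbb i, h0, mul_zero])
  have hA0 : ∀ i j, d i ≠ 0 → d j = 0 → A i j = 0 := by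
    intro i j hi hj
    have h := hrel i j
    rw [hj, mul_zero] at h
    rcases mul_eq_zero.mp h.symm with h' | h'
    · exact absurd h' hi
    · exact h'
  have hTentry : ∀ i j, (diagonal b * A * diagonal g) i j = b i * A i j * g j := by
    intro i j
    rw [Matrix.mul_diagonal, Matrix.diagonal_mul]
  have hTsymm : ∀ i j, (diagonal b * A * diagonal g) j i = (diagonal b * A * diagonal g) i j := by
    intro i j
    rw [hTentry, hTentry]
    by_cases hi : d i = 0
    · by_cases hj : d j = 0 <;> simp [hg, hb, hi, hj]
    · by_cases hj : d j = 0
      · simp [hg, hb, hi, hj]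
      · simp only [hg, hb, if_neg hi, if_neg hj]
        have hbi := hbne i hi
        have hbj := hbne j hj
        rw [hb] at hbi hbj
        field_simp
        linear_combination A j i * hbb j - A i j * hbb i + hrel i j
  have hTh : (diagonal b * A * diagonal g).IsHermitian := by
    ext i j
    rw [Matrix.conjTranspose_apply, star_trivial]
    exact hTsymm i j
  -- diagonal algebra facts
  have hsne : ∀ i, d i ≠ 0 → Real.sqrt (d i) ≠ 0 := by
    intro i hi
    have := hbne i hi
    rw [hb] at this
    exact this
  have hCB : diagonal g * diagonal b = diagonal q := by
    rw [Matrix.diagonal_mul_diagonal]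
    have : (fun i => g i * b i) = q := by
      funext i
      simp only [hg, hb, hq]
      by_cases hi : d i = 0
      · simp [hi]
      · rw [if_neg hi, if_neg hi]
        exact inv_mul_cancel₀ (hsne i hi)
    rw [this]
  have hQC : diagonal q * diagonal g = diagonal g := by
    rw [Matrix.diagonal_mul_diagonal]
    have : (fun i => q i * g i) = g := by
      funext i
      simp only [hg, hq]
      by_cases hi : d i = 0 <;> simp [hi]
    rw [this]
  have hQQ : diagonal q * diagonal q = diagonal q := by
    rw [Matrix.diagonal_mul_diagonal]
    have : (fun i => q i * q i) = q := by
      funext i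
      simp only [hq]
      by_cases hi : d i = 0 <;> simp [hi]
    rw [this]
  have hQR0 : diagonal q * diagonal r = 0 := by
    rw [Matrix.diagonal_mul_diagonal]
    have : (fun i => q i * r i) = fun _ => (0:ℝ) := by
      funext i
      simp only [hq, hr]
      by_cases hi : d i = 0 <;> simp [hi]
    rw [this]
    exact Matrix.diagonal_zero
  have hQplusR : diagonal q + diagonal r = (1 : Matrix (Fin n) (Fin n) ℝ) := by
    rw [Matrix.diagonal_add]
    have : (fun i => q i + r i) = fun _ => (1:ℝ) := by
      funext i
      simp only [hq, hr]
      by_cases hi : d i = 0 <;> simp [hi]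
    rw [this, Matrix.diagonal_one]
  have hQAR : diagonal q * A * diagonal r = 0 := by
    ext i j
    rw [Matrix.mul_diagonal, Matrix.diagonal_mul, Matrix.zero_apply]
    by_cases hi : d i = 0
    · simp [hq, hi]
    · by_cases hj : d j = 0
      · simp [hA0 i j hi hj]
      · simp [hr, hj]
  have hAR : A * diagonal r = diagonal r * A * diagonal r := by
    have h1 : (diagonal q + diagonal r) * A * diagonal r = A * diagonal r := by
      rw [hQplusR, Matrix.one_mul]
    rw [Matrix.add_mul, Matrix.add_mul, hQAR, zero_add] at h1
    exact h1.symm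
  -- every eigenvalue of T := diagonal b * A * diagonal g is ≤ 0
  have heigle : ∀ i, hTh.eigenvalues i ≤ 0 := by
    intro i0
    by_contra hpos
    push_neg at hpos
    set μ : ℝ := hTh.eigenvalues i0 with hμ
    have hμne : μ ≠ 0 := ne_of_gt hpos
    set v : Fin n → ℝ := ⇑(hTh.eigenvectorBasis i0) with hv
    have hveq : (diagonal b * A * diagonal g) *ᵥ v = μ • v := hTh.mulVec_eigenvectorBasis i0
    have hvne : v ≠ 0 := by
      intro h0
      have := hTh.eigenvectorBasis.orthonormal.ne_zero i0
      apply this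
      ext j
      exact congrFun h0 j
    set w : Fin n → ℝ := diagonal g *ᵥ v with hw
    have hQAw : diagonal q *ᵥ (A *ᵥ w) = μ • w := by
      have h1 : diagonal g *ᵥ ((diagonal b * A * diagonal g) *ᵥ v) = μ • w := by
        rw [hveq, Matrix.mulVec_smul, hw]
      rw [Matrix.mulVec_mulVec, show diagonal g * (diagonal b * A * diagonal g)
          = diagonal q * A * diagonal g from by
        rw [← Matrix.mul_assoc, ← Matrix.mul_assoc, hCB]] at h1
      rw [Matrix.mul_assoc, ← Matrix.mulVec_mulVec, ← Matrix.mulVec_mulVec] at h1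
      rw [← hw] at h1
      exact h1
    have hwne : w ≠ 0 := by
      intro h0
      have h1 : (diagonal b * A * diagonal g) *ᵥ v
          = diagonal b *ᵥ (A *ᵥ (diagonal g *ᵥ v)) := by
        rw [Matrix.mulVec_mulVec, Matrix.mulVec_mulVec, Matrix.mul_assoc]
      rw [← hw, h0, Matrix.mulVec_zero, Matrix.mulVec_zero, hveq] at h1
      rcases smul_eq_zero.mp h1 with h2 | h2
      · exact hμne h2
      · exact hvne h2
    have hQw : diagonal q *ᵥ w = w := by
      rw [hw, Matrix.mulVec_mulVec, hQC]
    -- the auxiliary matrix Φ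
    set Φ : Matrix (Fin n) (Fin n) ℝ :=
      diagonal q + μ • diagonal r - diagonal r * A * diagonal r with hΦ
    have hQΦ : diagonal q * Φ = diagonal q := by
      rw [hΦ, Matrix.mul_sub, Matrix.mul_add, hQQ, Matrix.mul_smul, hQR0, smul_zero, add_zero,
        ← Matrix.mul_assoc, ← Matrix.mul_assoc, hQR0, Matrix.zero_mul, Matrix.zero_mul, sub_zero]
    by_cases hdet : Φ.det = 0
    · obtain ⟨z, hzne, hz0⟩ := Matrix.exists_mulVec_eq_zero_iff.mpr hdet
      have hQz : diagonal q *ᵥ z = 0 := by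
        have := congrArg (fun x => diagonal q *ᵥ x) hz0
        simpa [Matrix.mulVec_mulVec, hQΦ] using this
      have hRz : diagonal r *ᵥ z = z := by
        have h1 : (diagonal q + diagonal r) *ᵥ z = z := by rw [hQplusR, Matrix.one_mulVec]
        rw [Matrix.add_mulVec, hQz, zero_add] at h1
        exact h1
      have hAz : A *ᵥ z = μ • z := by
        have h2 : (diagonal r * A * diagonal r) *ᵥ z = μ • z := by
          have h3 := hz0
          rw [hΦ, Matrix.sub_mulVec, Matrix.add_mulVec, hQz, Matrix.smul_mulVec, hRz,
            zero_add, sub_eq_zero] at h3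
          exact h3.symm
        calc A *ᵥ z = A *ᵥ (diagonal r *ᵥ z) := by rw [hRz]
          _ = (A * diagonal r) *ᵥ z := Matrix.mulVec_mulVec z A (diagonal r)
          _ = (diagonal r * A * diagonal r) *ᵥ z := by rw [hAR]
          _ = μ • z := h2
      exact absurd (hH μ z hzne hAz) (by linarith)
    · have hunit : IsUnit Φ.det := isUnit_iff_ne_zero.mpr hdet
      set c : Fin n → ℝ := diagonal r *ᵥ (A *ᵥ w) with hc
      set z : Fin n → ℝ := Φ⁻¹ *ᵥ c with hz
      have hΦz : Φ *ᵥ z = c := by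
        rw [hz, Matrix.mulVec_mulVec, Matrix.mul_nonsing_inv _ hunit, Matrix.one_mulVec]
      have hQc : diagonal q *ᵥ c = 0 := by
        rw [hc, Matrix.mulVec_mulVec, hQR0, Matrix.zero_mulVec]
      have hQz : diagonal q *ᵥ z = 0 := by
        have := congrArg (fun x => diagonal q *ᵥ x) hΦz
        simpa [Matrix.mulVec_mulVec, hQΦ, hQc] using this
      have hRz : diagonal r *ᵥ z = z := by
        have h1 : (diagonal q + diagonal r) *ᵥ z = z := by rw [hQplusR, Matrix.one_mulVec]
        rw [Matrix.add_mulVec, hQz, zero_add] at h1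
        exact h1
      have hAz : A *ᵥ z = μ • z - c := by
        have h3 := hΦz
        rw [hΦ, Matrix.sub_mulVec, Matrix.add_mulVec, hQz, Matrix.smul_mulVec, hRz,
          zero_add] at h3
        have h4 : (diagonal r * A * diagonal r) *ᵥ z = A *ᵥ z := by
          rw [← hAR, ← Matrix.mulVec_mulVec, hRz]
        rw [h4] at h3
        rw [eq_sub_iff_add_eq, ← h3]
        ring_nf
      have hAw : A *ᵥ w = μ • w + c := by
        have h1 : (diagonal q + diagonal r) *ᵥ (A *ᵥ w) = A *ᵥ w := by
          rw [hQplusR, Matrix.one_mulVec]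
        rw [Matrix.add_mulVec, hQAw, ← hc] at h1
        exact h1.symm
      have hAu : A *ᵥ (w + z) = μ • (w + z) := by
        rw [Matrix.mulVec_add, hAw, hAz, smul_add]
        abel
      have hune : w + z ≠ 0 := by
        intro h0
        apply hwne
        have h1 : diagonal q *ᵥ (w + z) = 0 := by rw [h0, Matrix.mulVec_zero]
        rw [Matrix.mulVec_add, hQw, hQz, add_zero] at h1
        exact h1
      exact absurd (hH μ (w + z) hune hAu) (by linarith)
  -- -T is positive semidefinite
  have hTneg : (-(diagonal b * A * diagonal g)).PosSemidef := by
    have hspec := hTh.spectral_theorem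
    have hofr : (RCLike.ofReal ∘ hTh.eigenvalues : Fin n → ℝ) = hTh.eigenvalues := by
      funext i
      simp [RCLike.ofReal_real_eq_id]
    rw [hofr] at hspec
    have h1 : -(diagonal b * A * diagonal g)
        = (hTh.eigenvectorUnitary : Matrix (Fin n) (Fin n) ℝ)
          * diagonal (fun i => -hTh.eigenvalues i)
          * (hTh.eigenvectorUnitary : Matrix (Fin n) (Fin n) ℝ)ᴴ := by
      conv_lhs => rw [hspec]
      rw [Unitary.conjStarAlgAut_apply, ← Matrix.diagonal_neg, Matrix.star_eq_conjTranspose]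
      simp only [Matrix.mul_neg, Matrix.neg_mul]
    rw [h1]
    exact (Matrix.posSemidef_diagonal_iff.mpr
      (fun i => neg_nonneg.mpr (heigle i))).mul_mul_conjTranspose_same _
  -- diagonal d * A = (diagonal b) * T * (diagonal b)
  have hDA : diagonal d * A = diagonal b * (diagonal b * A * diagonal g) * diagonal b := by
    ext i j
    rw [Matrix.diagonal_mul, Matrix.mul_diagonal, Matrix.diagonal_mul, hTentry]
    by_cases hj : d j = 0
    · have h0 : d i * A i j = 0 := by rw [← hrel, hj, mul_zero]
      simp only [hg, if_pos hj, h0, mul_zero, zero_mul]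
    · have h2 : g j * b j = 1 := by
        simp only [hg, hb, if_neg hj]
        exact inv_mul_cancel₀ (hsne j hj)
      simp only [hg, hb, if_neg hj] at h2 ⊢
      have h1 := hbb i
      rw [hb] at h1
      calc d i * A i j = (Real.sqrt (d i) * Real.sqrt (d i)) * A i j
            * ((Real.sqrt (d j))⁻¹ * Real.sqrt (d j)) := by rw [h1, h2, mul_one]
        _ = Real.sqrt (d i) * (Real.sqrt (d i) * A i j * (Real.sqrt (d j))⁻¹)
            * Real.sqrt (d j) := by ring
  have hfin : -(diagonal d * A)
      = diagonal b * (-(diagonal b * A * diagonal g)) * (diagonal b)ᴴ := by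
    have hBH : (diagonal b)ᴴ = diagonal b := by
      rw [Matrix.diagonal_conjTranspose]
      congr 1
    rw [hBH, hDA, Matrix.mul_neg, Matrix.neg_mul]
  rw [hfin]
  exact hTneg.mul_mul_conjTranspose_same _

/-- If `A` is Hurwitz and `G` is symmetric positive semidefinite with `Aᵀ G = G A`,
then `G * A` is symmetric and `-(G * A)` is positive semidefinite. -/
theorem hurwitz_reciprocal_GA_negSemidef {n : ℕ}
    (A G : Matrix (Fin n) (Fin n) ℝ)
    (hHurwitz : ∀ μ ∈ spectrum ℂ (A.map (fun a => (a : ℂ))), μ.re < 0)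
    (hG : G.PosSemidef) (hrec : Aᵀ * G = G * A) :
    (G * A)ᵀ = G * A ∧ (-(G * A)).PosSemidef := by
  classical
  have hGH : G.IsHermitian := hG.1
  have hGt : Gᵀ = G := by
    rw [← Matrix.conjTranspose_eq_transpose_of_trivial]
    exact hGH
  constructor
  · rw [Matrix.transpose_mul, hGt, hrec]
  · -- spectral data of G
    set V : Matrix (Fin n) (Fin n) ℝ := (hGH.eigenvectorUnitary : Matrix (Fin n) (Fin n) ℝ)
      with hVdef
    have hV1 : V * Vᵀ = 1 := by
      have := Matrix.mem_unitaryGroup_iff.mp hGH.eigenvectorUnitary.2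
      rwa [Matrix.star_eq_conjTranspose, Matrix.conjTranspose_eq_transpose_of_trivial] at this
    have hV2 : Vᵀ * V = 1 := by
      have := Matrix.mem_unitaryGroup_iff'.mp hGH.eigenvectorUnitary.2
      rwa [Matrix.star_eq_conjTranspose, Matrix.conjTranspose_eq_transpose_of_trivial] at this
    set d : Fin n → ℝ := hGH.eigenvalues with hd
    have hdnn : ∀ i, 0 ≤ d i := fun i => hG.eigenvalues_nonneg i
    have hspec : G = V * diagonal d * Vᵀ := by
      have h := hGH.spectral_theorem
      have hofr : (RCLike.ofReal ∘ hGH.eigenvalues : Fin n → ℝ) = hGH.eigenvalues := by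
        funext i
        simp [RCLike.ofReal_real_eq_id]
      rw [hofr, Unitary.conjStarAlgAut_apply, Matrix.star_eq_conjTranspose, Matrix.conjTranspose_eq_transpose_of_trivial] at h
      exact h
    -- cancellation helpers (left-associated forms)
    have mid1 : ∀ X Y : Matrix (Fin n) (Fin n) ℝ, X * V * Vᵀ * Y = X * Y := by
      intro X Y
      rw [Matrix.mul_assoc X V Vᵀ, hV1, Matrix.mul_one]
    have mid2 : ∀ X Y : Matrix (Fin n) (Fin n) ℝ, X * Vᵀ * V * Y = X * Y := by
      intro X Y
      rw [Matrix.mul_assoc X Vᵀ V, hV2, Matrix.mul_one]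
    set A' : Matrix (Fin n) (Fin n) ℝ := Vᵀ * A * V with hA'
    have hA't : A'ᵀ = Vᵀ * Aᵀ * V := by
      rw [hA', Matrix.transpose_mul, Matrix.transpose_mul, Matrix.transpose_transpose,
        ← Matrix.mul_assoc]
    have hDd : diagonal d = Vᵀ * G * V := by
      rw [hspec]
      simp only [← Matrix.mul_assoc]
      rw [hV2, Matrix.one_mul, Matrix.mul_assoc, hV2, Matrix.mul_one]
    have hrec' : A'ᵀ * diagonal d = diagonal d * A' := by
      rw [hA't, hDd, hA']
      simp only [← Matrix.mul_assoc]
      rw [mid1 (Vᵀ * Aᵀ) G, mid1 (Vᵀ * G) A]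
      rw [Matrix.mul_assoc Vᵀ Aᵀ G, hrec, ← Matrix.mul_assoc]
    have hAV : A * V = V * A' := by
      rw [hA']
      simp only [← Matrix.mul_assoc]
      rw [hV1, Matrix.one_mul]
    have hH' : ∀ (μ : ℝ) (u : Fin n → ℝ), u ≠ 0 → A' *ᵥ u = μ • u → μ < 0 := by
      intro μ u hu he
      have h2 : A *ᵥ (V *ᵥ u) = μ • (V *ᵥ u) := by
        rw [Matrix.mulVec_mulVec, hAV, ← Matrix.mulVec_mulVec, he, Matrix.mulVec_smul]
      have h3 : V *ᵥ u ≠ 0 := by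
        intro h0
        apply hu
        have h4 := congrArg (fun x => Vᵀ *ᵥ x) h0
        simpa [Matrix.mulVec_mulVec, hV2, Matrix.one_mulVec] using h4
      have h5 := hHurwitz (μ : ℂ) (mem_spectrum_of_real_eigenvector A μ (V *ᵥ u) h3 h2)
      simpa using h5
    have hcore := diag_core d hdnn A' hH' hrec'
    have rc1 : ∀ X : Matrix (Fin n) (Fin n) ℝ, X * V * Vᵀ = X := by
      intro X
      rw [Matrix.mul_assoc, hV1, Matrix.mul_one]
    have hGA : G * A = V * (diagonal d * A') * Vᵀ := by
      rw [hA', hspec]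
      simp only [← Matrix.mul_assoc]
      rw [rc1 (V * diagonal d * Vᵀ * A)]
    have hfin : -(G * A) = V * (-(diagonal d * A')) * Vᴴ := by
      rw [Matrix.conjTranspose_eq_transpose_of_trivial, hGA, Matrix.mul_neg, Matrix.neg_mul]
    rw [hfin]
    exact hcore.mul_mul_conjTranspose_same V
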